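/- Let p be a non-crossing partition of [n], B a block of p, 1 ≤ i < |B|, and let p′ = p_{B,i} be the partition obtained by splitting B into the block B₁ of its i smallest elements and the block B₂ of its remaining elements. Then p′ is non-crossing, d_{p′}(B₁) = d_{p′}(B₂) = d_p(B), and every block B′ of p other than B satisfies d_{p′}(B′) ≤ d_p(B′). -/
import Mathlib


namespace NCPaper

/-- The index set `[n] = {1, …, n}` inside `ℕ`. -/
def Idx (n : ℕ) : Set ℕ := Set.Icc 1 n

/-- `r` is (the equivalence relation of) a partition of the set `S`:
a symmetric, transitive relation on `ℕ` whose domain is exactly `S`.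
For `S ⊆ [n]` this encodes a partial partition of `[n]` with support `S`;
its blocks are the equivalence classes. -/
def IsPartitionOn (S : Set ℕ) (r : ℕ → ℕ → Prop) : Prop :=
  (∀ i j, r i j → r j i) ∧ (∀ i j k, r i j → r j k → r i k) ∧ (∀ i, r i i ↔ i ∈ S)

/-- A partition (relation) is non-crossing if there are no `i < j < k < l`
with `i ∼ k`, `j ∼ l` and `i ≁ j`. -/
def NonCrossing (r : ℕ → ℕ → Prop) : Prop :=
  ∀ i j k l, i < j → j < k → k < l → r i k → r j l → r i j

/-- Refinement order on partitions encoded as relations: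
`r ≤ s` iff every block of `r` is contained in a block of `s`. -/
def RelLE (r s : ℕ → ℕ → Prop) : Prop := ∀ i j, r i j → s i j

/-- Join of two partial partitions with complementary (disjoint) supports:
the partition whose blocks are the blocks of `r` together with those of `s`. -/
def relJoin (r s : ℕ → ℕ → Prop) : ℕ → ℕ → Prop := fun i j => r i j ∨ s i j

/-- `k` lies (weakly) between `i` and `j`, i.e. `k ∈ {min i j, …, max i j}`. -/
def Between (i j k : ℕ) : Prop := min i j ≤ k ∧ k ≤ max i j

/-- The Kreweras complement `kr(r, S)` of the partial partition `(r, S)` of `[n]`: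
the relation with support `[n] \ S` in which `i ∼ j` iff no element `k` of
`{i,…,j} ∩ S` is `r`-equivalent to an element `l` of `S \ {i,…,j}`. -/
def krRel (n : ℕ) (S : Set ℕ) (r : ℕ → ℕ → Prop) : ℕ → ℕ → Prop :=
  fun i j => i ∈ Idx n ∧ j ∈ Idx n ∧ i ∉ S ∧ j ∉ S ∧
    ∀ k l, k ∈ S → l ∈ S → Between i j k → ¬ Between i j l → ¬ r k l

/-- Transport of a relation along a map. -/
def mapRel (f : ℕ → ℕ) (r : ℕ → ℕ → Prop) : ℕ → ℕ → Prop :=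
  fun a b => ∃ i j, f i = a ∧ f j = b ∧ r i j

/-- `i ↦ 2i - δ(i)` where `δ(i) = 1` for odd `i` and `δ(i) = 0` for even `i`;
this maps `[2k]` onto `S = {1,4,5,8,…,4k-3,4k} ⊆ [4k]`. -/
def fS (i : ℕ) : ℕ := 2 * i - i % 2

/-- `i ↦ 2i - (1 - δ(i))`; this maps `[2k]` onto `Sᶜ = {2,3,6,7,…} ⊆ [4k]`. -/
def fSc (i : ℕ) : ℕ := 2 * i - (1 - i % 2)

/-- The nested Kreweras complement `kr′(π)` of a partition `π` of `[2k]`: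
transport `π` along `fS` to a partial partition of `[4k]` with support
`fS '' [2k]`, take its Kreweras complement and transport back along `fSc`. -/
def krNested (k : ℕ) (r : ℕ → ℕ → Prop) : ℕ → ℕ → Prop :=
  fun i j => krRel (4 * k) (fS '' Idx (2 * k)) (mapRel fS r) (fSc i) (fSc j)

/-- `π₀`: the partition of `[2k]` with blocks `{2i, 2i+1}`, indices mod `2k`
(so one block is `{2k, 1}`). -/
def piZero (k : ℕ) : ℕ → ℕ → Prop := fun i j =>
  i ∈ Idx (2 * k) ∧ j ∈ Idx (2 * k) ∧
    (i = j ∨ (Even i ∧ j = i + 1) ∨ (Even j ∧ i = j + 1) ∨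
      (i = 1 ∧ j = 2 * k) ∨ (j = 1 ∧ i = 2 * k))

/-- `π₁`: the partition of `[2k]` with blocks `{2i-1, 2i}`, `1 ≤ i ≤ k`. -/
def piOne (k : ℕ) : ℕ → ℕ → Prop := fun i j =>
  i ∈ Idx (2 * k) ∧ j ∈ Idx (2 * k) ∧
    (i = j ∨ (Odd i ∧ j = i + 1) ∨ (Odd j ∧ i = j + 1))

/-- The `i`-th odd position `2i - 1` in `[2n]`. -/
def oddPos (i : ℕ) : ℕ := 2 * i - 1

/-- The `i`-th even position `2i` in `[2n]`. -/
def evenPos (i : ℕ) : ℕ := 2 * i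

/-- The Kreweras complement `K(p)` of a partition `p` of `[n]`: transport `p`
along `i ↦ 2i-1` to the odd positions `σ = {1,3,…,2n-1}` of `[2n]`, take the
Kreweras complement there, and transport back along `i ↦ 2i`. -/
def Kmap (n : ℕ) (r : ℕ → ℕ → Prop) : ℕ → ℕ → Prop :=
  fun i j => krRel (2 * n) (oddPos '' Idx n) (mapRel oddPos r) (evenPos i) (evenPos j)

/-- `p° = (p̂,σ) ∨ (K̂(p),σᶜ)`: the partition of `[2n]` obtained by placing `p`
on the odd positions and `K(p)` on the even positions. -/
def pCirc (n : ℕ) (p : ℕ → ℕ → Prop) : ℕ → ℕ → Prop :=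
  relJoin (mapRel oddPos p) (mapRel evenPos (Kmap n p))

/-- `F(π)` for `π ≥ π₀`: `i ∼ j` iff `2i-1 ∼_π 2j-1`. -/
def Fmap (r : ℕ → ℕ → Prop) : ℕ → ℕ → Prop := fun i j => r (2 * i - 1) (2 * j - 1)

/-- `G(π)` for `π ≥ π₁`: `i ∼ j` iff `2i ∼_π 2j`. -/
def Gmap (r : ℕ → ℕ → Prop) : ℕ → ℕ → Prop := fun i j => r (2 * i) (2 * j)

/-- `B` is a block of the partition (relation) `r`. -/
def IsBlock (r : ℕ → ℕ → Prop) (B : Set ℕ) : Prop := ∃ i, r i i ∧ B = {j | r i j}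

/-- The number `|r|` of blocks of the partition `r`. -/
noncomputable def numBlocks (r : ℕ → ℕ → Prop) : ℕ := {B : Set ℕ | IsBlock r B}.ncard

/-- `B' ⪯ B` for `B = {i₁<…<i_t}`, `B' = {j₁<…<j_{t'}}`: `i₁ < j₁` and `j_{t'} < i_t`. -/
def Nested (B' B : Set ℕ) : Prop := sInf B < sInf B' ∧ sSup B' < sSup B

/-- The depth `d_p(B)` of a block `B`: the maximal number `m` of blocks in a
chain `B = X₁ ⪯ X₂ ⪯ … ⪯ X_m` of blocks of `p`. -/
noncomputable def depth (p : ℕ → ℕ → Prop) (B : Set ℕ) : ℕ :=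
  sSup {m : ℕ | ∃ c : ℕ → Set ℕ, c 1 = B ∧
    (∀ i, 1 ≤ i → i ≤ m → IsBlock p (c i)) ∧
    (∀ i, 1 ≤ i → i < m → Nested (c i) (c (i + 1)))}

/-- `p_{B,B'}`: the partition obtained from `p` by merging the blocks `B` and `B'`. -/
def mergeRel (p : ℕ → ℕ → Prop) (B B' : Set ℕ) : ℕ → ℕ → Prop :=
  fun i j => p i j ∨ (p i i ∧ p j j ∧ i ∈ B ∪ B' ∧ j ∈ B ∪ B')

/-- Two distinct blocks `B, B'` of `p` are adjacent if replacing them by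
`B ∪ B'` yields a non-crossing partition. -/
def Adjacent (p : ℕ → ℕ → Prop) (B B' : Set ℕ) : Prop :=
  IsBlock p B ∧ IsBlock p B' ∧ B ≠ B' ∧ NonCrossing (mergeRel p B B')

/-- The set of the `i` smallest elements of `B`. -/
def lowerPart (B : Set ℕ) (i : ℕ) : Set ℕ := {x ∈ B | (B ∩ Set.Iic x).ncard ≤ i}

/-- The set of the remaining elements of `B` (all but the `i` smallest). -/
def upperPart (B : Set ℕ) (i : ℕ) : Set ℕ := {x ∈ B | i < (B ∩ Set.Iic x).ncard}

/-- `p_{B,i}`: the partition obtained from `p` by splitting the block `B` into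
the block of its `i` smallest elements and the block of its remaining elements. -/
def splitRel (p : ℕ → ℕ → Prop) (B : Set ℕ) (i : ℕ) : ℕ → ℕ → Prop :=
  fun x y => p x y ∧ ((x ∈ lowerPart B i ∧ y ∈ lowerPart B i) ∨
    (x ∈ upperPart B i ∧ y ∈ upperPart B i) ∨ (x ∉ B ∧ y ∉ B))

/-- The `i`-th smallest element of `B` (1-indexed). -/
noncomputable def nthSmall (B : Set ℕ) (i : ℕ) : ℕ :=
  sInf {x | x ∈ B ∧ (B ∩ Set.Iic x).ncard = i}

-- ## Auxiliary lemmas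

def chainSet (q : ℕ → ℕ → Prop) (C : Set ℕ) : Set ℕ :=
  {m : ℕ | ∃ c : ℕ → Set ℕ, c 1 = C ∧
    (∀ i, 1 ≤ i → i ≤ m → IsBlock q (c i)) ∧
    (∀ i, 1 ≤ i → i < m → Nested (c i) (c (i + 1)))}

lemma depth_eq (q : ℕ → ℕ → Prop) (C : Set ℕ) : depth q C = sSup (chainSet q C) := rfl

lemma zero_mem_chainSet (q : ℕ → ℕ → Prop) (C : Set ℕ) : 0 ∈ chainSet q C :=
  ⟨fun _ => C, rfl, fun _ h1 h2 => by omega, fun _ h1 h2 => by omega⟩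

lemma nested_trans {A C D : Set ℕ} (h1 : Nested A C) (h2 : Nested C D) : Nested A D :=
  ⟨h2.1.trans h1.1, h1.2.trans h2.2⟩

lemma nested_irrefl (X : Set ℕ) : ¬ Nested X X := fun h => lt_irrefl _ h.1

lemma chain_nested {c : ℕ → Set ℕ} {m : ℕ}
    (h : ∀ j, 1 ≤ j → j < m → Nested (c j) (c (j + 1))) :
    ∀ a b, 1 ≤ a → a < b → b ≤ m → Nested (c a) (c b) := by
  intro a b ha hab hbm
  induction b with
  | zero => omega
  | succ b ih =>
    rcases Nat.lt_or_ge a b with h' | h'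
    · exact nested_trans (ih h' (by omega)) (h b (by omega) (by omega))
    · have hab' : a = b := by omega
      subst hab'
      exact h a ha (by omega)

lemma chainSet_bddAbove (q : ℕ → ℕ → Prop) (C : Set ℕ) : BddAbove (chainSet q C) := by
  refine ⟨sInf C + 1, ?_⟩
  rintro m ⟨c, hc1, -, hN⟩
  have key : ∀ j, 1 ≤ j → j ≤ m → sInf (c j) + j ≤ sInf (c 1) + 1 := by
    intro j h1 h2
    induction j with
    | zero => omega
    | succ j ih =>
      rcases Nat.lt_or_ge 1 (j + 1) with hj | hj
      · have hj1 : 1 ≤ j := by omega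
        have h3 := (hN j hj1 (by omega)).1
        have h4 := ih hj1 (by omega)
        omega
      · have : j + 1 = 1 := by omega
        rw [this]
  rcases Nat.eq_zero_or_pos m with rfl | hm
  · exact Nat.zero_le _
  · have := key m hm le_rfl
    rw [hc1] at this
    omega

lemma mem_block_iff {n : ℕ} {p : ℕ → ℕ → Prop} {B : Set ℕ}
    (hp : IsPartitionOn (Idx n) p) (hB : IsBlock p B)
    {x : ℕ} (hx : x ∈ B) (j : ℕ) : p x j ↔ j ∈ B := by
  obtain ⟨u, hu, rfl⟩ := hB
  simp only [Set.mem_setOf_eq] at hx ⊢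
  exact ⟨fun h => hp.2.1 _ _ _ hx h, fun h => hp.2.1 _ _ _ (hp.1 _ _ hx) h⟩

lemma block_eq_block {n : ℕ} {p : ℕ → ℕ → Prop} {B B' : Set ℕ}
    (hp : IsPartitionOn (Idx n) p) (hB : IsBlock p B) (hB' : IsBlock p B')
    {x : ℕ} (hx : x ∈ B) (hx' : x ∈ B') : B = B' := by
  ext j
  rw [← mem_block_iff hp hB hx j, ← mem_block_iff hp hB' hx' j]

lemma block_subset {n : ℕ} {p : ℕ → ℕ → Prop} {B : Set ℕ}
    (hp : IsPartitionOn (Idx n) p) (hB : IsBlock p B) : B ⊆ Idx n := by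
  obtain ⟨u, hu, rfl⟩ := hB
  intro j hj
  exact (hp.2.2 j).1 (hp.2.1 _ _ _ (hp.1 _ _ hj) hj)

lemma block_finite {n : ℕ} {p : ℕ → ℕ → Prop} {B : Set ℕ}
    (hp : IsPartitionOn (Idx n) p) (hB : IsBlock p B) : B.Finite :=
  (Set.finite_Icc 1 n).subset (block_subset hp hB)

lemma block_nonempty {p : ℕ → ℕ → Prop} {B : Set ℕ} (hB : IsBlock p B) : B.Nonempty := by
  obtain ⟨u, hu, rfl⟩ := hB
  exact ⟨u, hu⟩


section LU

variable {n : ℕ} {p : ℕ → ℕ → Prop} {B : Set ℕ} {i : ℕ}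

lemma rank_mono (hfin : B.Finite) {x y : ℕ} (h : x ≤ y) :
    (B ∩ Set.Iic x).ncard ≤ (B ∩ Set.Iic y).ncard :=
  Set.ncard_le_ncard (Set.inter_subset_inter_right _ (Set.Iic_subset_Iic.2 h))
    (hfin.inter_of_left _)

lemma lower_subset : lowerPart B i ⊆ B := fun _ hx => hx.1

lemma upper_subset : upperPart B i ⊆ B := fun _ hx => hx.1

lemma lower_union_upper : lowerPart B i ∪ upperPart B i = B := by
  ext x
  simp only [lowerPart, upperPart, Set.mem_union, Set.mem_setOf_eq]
  constructor
  · rintro (⟨h, -⟩ | ⟨h, -⟩) <;> exact h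
  · intro h
    rcases le_or_gt (B ∩ Set.Iic x).ncard i with h' | h'
    · exact Or.inl ⟨h, h'⟩
    · exact Or.inr ⟨h, h'⟩

lemma lower_disj_upper {x : ℕ} (h1 : x ∈ lowerPart B i) (h2 : x ∈ upperPart B i) : False := by
  have := h1.2; have := h2.2; omega

lemma lower_lt_upper (hfin : B.Finite) {x y : ℕ}
    (hx : x ∈ lowerPart B i) (hy : y ∈ upperPart B i) : x < y := by
  by_contra h
  push_neg at h
  have := rank_mono hfin h
  have := hx.2; have := hy.2
  omega

lemma sInf_mem_lower (hne : B.Nonempty) (hi1 : 1 ≤ i) : sInf B ∈ lowerPart B i := by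
  have h0 : sInf B ∈ B := Nat.sInf_mem hne
  refine ⟨h0, ?_⟩
  have heq : B ∩ Set.Iic (sInf B) = {sInf B} := by
    ext x
    constructor
    · rintro ⟨hxB, hx⟩
      exact le_antisymm hx (Nat.sInf_le hxB)
    · rintro rfl
      exact ⟨h0, Set.mem_Iic.mpr le_rfl⟩
  rw [heq, Set.ncard_singleton]
  exact hi1

lemma sSup_mem_upper (hfin : B.Finite) (hne : B.Nonempty) (hi2 : i < B.ncard) :
    sSup B ∈ upperPart B i := by
  have h0 : sSup B ∈ B := Nat.sSup_mem hne hfin.bddAbove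
  refine ⟨h0, ?_⟩
  have heq : B ∩ Set.Iic (sSup B) = B := by
    apply Set.inter_eq_self_of_subset_left
    intro x hx
    exact le_csSup hfin.bddAbove hx
  rw [heq]
  exact hi2

lemma lower_nonempty (hne : B.Nonempty) (hi1 : 1 ≤ i) : (lowerPart B i).Nonempty :=
  ⟨sInf B, sInf_mem_lower hne hi1⟩

lemma upper_nonempty (hfin : B.Finite) (hne : B.Nonempty) (hi2 : i < B.ncard) :
    (upperPart B i).Nonempty :=
  ⟨sSup B, sSup_mem_upper hfin hne hi2⟩

lemma sInf_lower_eq (hne : B.Nonempty) (hi1 : 1 ≤ i) : sInf (lowerPart B i) = sInf B :=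
  le_antisymm (Nat.sInf_le (sInf_mem_lower hne hi1))
    (Nat.sInf_le (lower_subset (Nat.sInf_mem (lower_nonempty hne hi1))))

lemma sSup_upper_eq (hfin : B.Finite) (hne : B.Nonempty) (hi2 : i < B.ncard) :
    sSup (upperPart B i) = sSup B := by
  apply le_antisymm
  · exact le_csSup hfin.bddAbove
      (upper_subset (Nat.sSup_mem (upper_nonempty hfin hne hi2)
        (hfin.subset upper_subset).bddAbove))
  · exact le_csSup (hfin.subset upper_subset).bddAbove (sSup_mem_upper hfin hne hi2)

lemma sSup_lower_lt (hfin : B.Finite) (hne : B.Nonempty) (hi1 : 1 ≤ i) (hi2 : i < B.ncard) :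
    sSup (lowerPart B i) < sSup B :=
  lower_lt_upper hfin
    (Nat.sSup_mem (lower_nonempty hne hi1) (hfin.subset lower_subset).bddAbove)
    (sSup_mem_upper hfin hne hi2)

lemma sInf_lt_upper (hfin : B.Finite) (hne : B.Nonempty) (hi1 : 1 ≤ i) (hi2 : i < B.ncard) :
    sInf B < sInf (upperPart B i) :=
  lower_lt_upper hfin (sInf_mem_lower hne hi1)
    (Nat.sInf_mem (upper_nonempty hfin hne hi2))

lemma sSup_lower_le (hfin : B.Finite) (hne : B.Nonempty) (hi1 : 1 ≤ i) :
    sSup (lowerPart B i) ≤ sSup B :=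
  le_csSup hfin.bddAbove
    (lower_subset (Nat.sSup_mem (lower_nonempty hne hi1) (hfin.subset lower_subset).bddAbove))

lemma sInf_le_upper (hfin : B.Finite) (hne : B.Nonempty) (hi2 : i < B.ncard) :
    sInf B ≤ sInf (upperPart B i) :=
  Nat.sInf_le (upper_subset (Nat.sInf_mem (upper_nonempty hfin hne hi2)))

end LU


section Blocks

variable {n : ℕ} {p : ℕ → ℕ → Prop} {B : Set ℕ} {i : ℕ}

lemma splitRel_class_lower (hp : IsPartitionOn (Idx n) p) (hB : IsBlock p B)
    {x : ℕ} (hx : x ∈ lowerPart B i) : {j | splitRel p B i x j} = lowerPart B i := by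
  ext j
  simp only [Set.mem_setOf_eq, splitRel]
  constructor
  · rintro ⟨hpj, ⟨-, hj⟩ | ⟨hxu, -⟩ | ⟨hxB, -⟩⟩
    · exact hj
    · exact absurd (lower_disj_upper hx hxu) id
    · exact absurd hx.1 hxB
  · intro hj
    exact ⟨(mem_block_iff hp hB hx.1 j).2 hj.1, Or.inl ⟨hx, hj⟩⟩

lemma splitRel_class_upper (hp : IsPartitionOn (Idx n) p) (hB : IsBlock p B)
    {x : ℕ} (hx : x ∈ upperPart B i) : {j | splitRel p B i x j} = upperPart B i := by
  ext j
  simp only [Set.mem_setOf_eq, splitRel]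
  constructor
  · rintro ⟨hpj, ⟨hxl, -⟩ | ⟨-, hj⟩ | ⟨hxB, -⟩⟩
    · exact absurd (lower_disj_upper hxl hx) id
    · exact hj
    · exact absurd hx.1 hxB
  · intro hj
    exact ⟨(mem_block_iff hp hB hx.1 j).2 hj.1, Or.inr (Or.inl ⟨hx, hj⟩)⟩

lemma splitRel_class_out (hp : IsPartitionOn (Idx n) p) (hB : IsBlock p B)
    {x : ℕ} (hx : x ∉ B) : {j | splitRel p B i x j} = {j | p x j} := by
  ext j
  simp only [Set.mem_setOf_eq, splitRel]
  constructor
  · rintro ⟨hpj, -⟩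
    exact hpj
  · intro hpj
    refine ⟨hpj, Or.inr (Or.inr ⟨hx, fun hjB => hx ?_⟩)⟩
    exact (mem_block_iff hp hB hjB x).1 (hp.1 _ _ hpj)

lemma isBlock_splitRel_iff (hp : IsPartitionOn (Idx n) p) (hB : IsBlock p B)
    (hi1 : 1 ≤ i) (hi2 : i < B.ncard) {C : Set ℕ} :
    IsBlock (splitRel p B i) C ↔
      C = lowerPart B i ∨ C = upperPart B i ∨ (IsBlock p C ∧ C ≠ B) := by
  have hfin := block_finite hp hB
  have hne := block_nonempty hB
  constructor
  · rintro ⟨x, hxx, rfl⟩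
    rcases hxx.2 with ⟨hxl, -⟩ | ⟨hxu, -⟩ | ⟨hxB, -⟩
    · exact Or.inl (splitRel_class_lower hp hB hxl)
    · exact Or.inr (Or.inl (splitRel_class_upper hp hB hxu))
    · refine Or.inr (Or.inr ?_)
      rw [splitRel_class_out hp hB hxB]
      refine ⟨⟨x, hxx.1, rfl⟩, fun hCB => hxB ?_⟩
      have : x ∈ {j | p x j} := hxx.1
      rw [hCB] at this
      exact this
  · rintro (rfl | rfl | ⟨hC, hCB⟩)
    · obtain ⟨hxB, -⟩ := sInf_mem_lower hne hi1
      refine ⟨sInf B, ?_, (splitRel_class_lower hp hB (sInf_mem_lower hne hi1)).symm⟩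
      exact ⟨(mem_block_iff hp hB hxB _).2 hxB, Or.inl ⟨sInf_mem_lower hne hi1, sInf_mem_lower hne hi1⟩⟩
    · obtain ⟨hxB, -⟩ := sSup_mem_upper hfin hne hi2
      refine ⟨sSup B, ?_, (splitRel_class_upper hp hB (sSup_mem_upper hfin hne hi2)).symm⟩
      exact ⟨(mem_block_iff hp hB hxB _).2 hxB,
        Or.inr (Or.inl ⟨sSup_mem_upper hfin hne hi2, sSup_mem_upper hfin hne hi2⟩)⟩
    · obtain ⟨u, hu, rfl⟩ := hC
      have huC : u ∈ {j | p u j} := hu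
      have huB : u ∉ B := fun huB => hCB (block_eq_block hp ⟨u, hu, rfl⟩ hB huC huB)
      refine ⟨u, ⟨hu, Or.inr (Or.inr ⟨huB, huB⟩)⟩, (splitRel_class_out hp hB huB).symm⟩

end Blocks


section NestedLemmas

variable {n : ℕ} {p : ℕ → ℕ → Prop} {B X : Set ℕ} {i : ℕ}

/-- Nested B X → Nested lower X (easy direction). -/
lemma nested_imp_lower (hp : IsPartitionOn (Idx n) p) (hB : IsBlock p B)
    (hi1 : 1 ≤ i) (hi2 : i < B.ncard) (h : Nested B X) : Nested (lowerPart B i) X := by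
  have hfin := block_finite hp hB
  have hne := block_nonempty hB
  exact ⟨by rw [sInf_lower_eq hne hi1]; exact h.1,
    lt_of_le_of_lt (sSup_lower_le hfin hne hi1) h.2⟩

lemma nested_imp_upper (hp : IsPartitionOn (Idx n) p) (hB : IsBlock p B)
    (hi1 : 1 ≤ i) (hi2 : i < B.ncard) (h : Nested B X) : Nested (upperPart B i) X := by
  have hfin := block_finite hp hB
  have hne := block_nonempty hB
  exact ⟨lt_of_lt_of_le h.1 (sInf_le_upper hfin hne hi2),
    by rw [sSup_upper_eq hfin hne hi2]; exact h.2⟩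

/-- Nested X lower → Nested X B (easy direction). -/
lemma nested_of_lower (hp : IsPartitionOn (Idx n) p) (hB : IsBlock p B)
    (hi1 : 1 ≤ i) (hi2 : i < B.ncard) (h : Nested X (lowerPart B i)) : Nested X B := by
  have hfin := block_finite hp hB
  have hne := block_nonempty hB
  exact ⟨by rw [← sInf_lower_eq hne hi1]; exact h.1,
    lt_of_lt_of_le h.2 (sSup_lower_le hfin hne hi1)⟩

lemma nested_of_upper (hp : IsPartitionOn (Idx n) p) (hB : IsBlock p B)
    (hi1 : 1 ≤ i) (hi2 : i < B.ncard) (h : Nested X (upperPart B i)) : Nested X B := by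
  have hfin := block_finite hp hB
  have hne := block_nonempty hB
  exact ⟨lt_of_le_of_lt (sInf_le_upper hfin hne hi2) h.1,
    by rw [← sSup_upper_eq hfin hne hi2]; exact h.2⟩

lemma not_nested_lu (hp : IsPartitionOn (Idx n) p) (hB : IsBlock p B)
    (hi1 : 1 ≤ i) (hi2 : i < B.ncard) {Y Z : Set ℕ}
    (hY : Y = lowerPart B i ∨ Y = upperPart B i) (hZ : Z = lowerPart B i ∨ Z = upperPart B i) :
    ¬ Nested Y Z := by
  have hfin := block_finite hp hB
  have hne := block_nonempty hB
  have h1 := sInf_lower_eq (B := B) (i := i) hne hi1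
  have h2 := sSup_upper_eq (B := B) (i := i) hfin hne hi2
  have h3 := sSup_lower_lt (B := B) (i := i) hfin hne hi1 hi2
  have h4 := sInf_lt_upper (B := B) (i := i) hfin hne hi1 hi2
  rcases hY with rfl | rfl <;> rcases hZ with rfl | rfl <;> rintro ⟨ha, hb⟩ <;> omega

/-- Crossing lemma: Nested lower X → Nested B X for a block X ≠ B. -/
lemma nested_lower_imp (hp : IsPartitionOn (Idx n) p) (hnc : NonCrossing p)
    (hB : IsBlock p B) (hi1 : 1 ≤ i) (hi2 : i < B.ncard)
    (hX : IsBlock p X) (hXB : X ≠ B) (h : Nested (lowerPart B i) X) : Nested B X := by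
  have hfin := block_finite hp hB
  have hne := block_nonempty hB
  have hXfin := block_finite hp hX
  have hXne := block_nonempty hX
  have h1 : sInf X < sInf B := by rw [← sInf_lower_eq hne hi1]; exact h.1
  refine ⟨h1, ?_⟩
  have hd : sSup B ≠ sSup X := by
    intro he
    have h1' : sSup B ∈ B := Nat.sSup_mem hne hfin.bddAbove
    have h2' : sSup X ∈ X := Nat.sSup_mem hXne hXfin.bddAbove
    rw [← he] at h2'
    exact hXB (block_eq_block hp hX hB h2' h1')
  rcases lt_or_gt_of_ne hd with hlt | hgt
  · exact hlt
  exfalso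
  -- crossing: a = sInf X < b = sSup lower < c = sSup X < d = sSup B
  set a := sInf X
  set b := sSup (lowerPart B i)
  set c := sSup X
  set d := sSup B
  have hbl : b ∈ lowerPart B i := Nat.sSup_mem (lower_nonempty hne hi1) (hfin.subset lower_subset).bddAbove
  have haX : a ∈ X := Nat.sInf_mem hXne
  have hcX : c ∈ X := Nat.sSup_mem hXne hXfin.bddAbove
  have hdB : d ∈ B := Nat.sSup_mem hne hfin.bddAbove
  have hab : a < b := lt_of_lt_of_le h1 (by rw [← sInf_lower_eq hne hi1]; exact Nat.sInf_le hbl)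
  have hbc : b < c := h.2
  have hcd : c < d := hgt
  have hac : p a c := (mem_block_iff hp hX haX c).2 hcX
  have hbd : p b d := (mem_block_iff hp hB hbl.1 d).2 hdB
  have hab' : p a b := hnc a b c d hab hbc hcd hac hbd
  exact hXB (block_eq_block hp hX hB ((mem_block_iff hp hX haX b).1 hab') hbl.1)

/-- Crossing lemma: Nested upper X → Nested B X for a block X ≠ B. -/
lemma nested_upper_imp (hp : IsPartitionOn (Idx n) p) (hnc : NonCrossing p)
    (hB : IsBlock p B) (hi1 : 1 ≤ i) (hi2 : i < B.ncard)
    (hX : IsBlock p X) (hXB : X ≠ B) (h : Nested (upperPart B i) X) : Nested B X := by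
  have hfin := block_finite hp hB
  have hne := block_nonempty hB
  have hXfin := block_finite hp hX
  have hXne := block_nonempty hX
  have h2 : sSup B < sSup X := by rw [← sSup_upper_eq hfin hne hi2]; exact h.2
  refine ⟨?_, h2⟩
  have hd : sInf X ≠ sInf B := by
    intro he
    have h1' : sInf B ∈ B := Nat.sInf_mem hne
    have h2' : sInf X ∈ X := Nat.sInf_mem hXne
    rw [he] at h2'
    exact hXB (block_eq_block hp hX hB h2' h1')
  rcases lt_or_gt_of_ne hd with hlt | hgt
  · exact hlt
  exfalso
  -- crossing: a = sInf B < b = sInf X < c = sInf upper < d = sSup X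
  set a := sInf B
  set b := sInf X
  set c := sInf (upperPart B i)
  set d := sSup X
  have hcu : c ∈ upperPart B i := Nat.sInf_mem (upper_nonempty hfin hne hi2)
  have haB : a ∈ B := Nat.sInf_mem hne
  have hbX : b ∈ X := Nat.sInf_mem hXne
  have hdX : d ∈ X := Nat.sSup_mem hXne hXfin.bddAbove
  have hab : a < b := hgt
  have hbc : b < c := h.1
  have hcd : c < d := by
    have : c ≤ sSup (upperPart B i) := le_csSup (hfin.subset upper_subset).bddAbove hcu
    rw [sSup_upper_eq hfin hne hi2] at this
    omega
  have hac : p a c := (mem_block_iff hp hB haB c).2 hcu.1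
  have hbd : p b d := (mem_block_iff hp hX hbX d).2 hdX
  have hab' : p a b := hnc a b c d hab hbc hcd hac hbd
  exact hXB (block_eq_block hp hX hB hbX ((mem_block_iff hp hB haB b).1 hab'))

end NestedLemmas


section Chains

variable {n : ℕ} {p : ℕ → ℕ → Prop} {B : Set ℕ} {i : ℕ}

lemma chainSet_lower_subset (hp : IsPartitionOn (Idx n) p) (hnc : NonCrossing p)
    (hB : IsBlock p B) (hi1 : 1 ≤ i) (hi2 : i < B.ncard) :
    chainSet (splitRel p B i) (lowerPart B i) ⊆ chainSet p B := by
  rintro m ⟨c, hc1, hBl, hN⟩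
  have hblk : ∀ j, 2 ≤ j → j ≤ m → IsBlock p (c j) ∧ c j ≠ B := by
    intro j h2 hm
    have hnest : Nested (lowerPart B i) (c j) := by
      have := chain_nested hN 1 j le_rfl (by omega) hm
      rwa [hc1] at this
    rcases (isBlock_splitRel_iff hp hB hi1 hi2).1 (hBl j (by omega) hm) with h | h | h
    · exact absurd hnest (by rw [h]; exact not_nested_lu hp hB hi1 hi2 (Or.inl rfl) (Or.inl rfl))
    · exact absurd hnest (by rw [h]; exact not_nested_lu hp hB hi1 hi2 (Or.inl rfl) (Or.inr rfl))
    · exact h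
  refine ⟨fun j => if j = 1 then B else c j, if_pos rfl, ?_, ?_⟩
  · intro j h1 hm
    dsimp only
    by_cases hj : j = 1
    · rw [if_pos hj]; exact hB
    · rw [if_neg hj]; exact (hblk j (by omega) hm).1
  · intro j h1 hm
    dsimp only
    by_cases hj : j = 1
    · subst hj
      rw [if_pos rfl, if_neg (by omega : ¬ (1 + 1 = 1))]
      have hnest : Nested (lowerPart B i) (c 2) := by
        have := hN 1 le_rfl hm
        rwa [hc1] at this
      exact nested_lower_imp hp hnc hB hi1 hi2 (hblk 2 le_rfl (by omega)).1
        (hblk 2 le_rfl (by omega)).2 hnest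
    · rw [if_neg hj, if_neg (by omega : ¬ (j + 1 = 1))]
      exact hN j h1 hm

lemma chainSet_lower_supset (hp : IsPartitionOn (Idx n) p)
    (hB : IsBlock p B) (hi1 : 1 ≤ i) (hi2 : i < B.ncard) :
    chainSet p B ⊆ chainSet (splitRel p B i) (lowerPart B i) := by
  rintro m ⟨c, hc1, hBl, hN⟩
  have hblk : ∀ j, 2 ≤ j → j ≤ m → IsBlock (splitRel p B i) (c j) := by
    intro j h2 hm
    have hnest : Nested B (c j) := by
      have := chain_nested hN 1 j le_rfl (by omega) hm
      rwa [hc1] at this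
    have hneq : c j ≠ B := by
      intro he
      rw [he] at hnest
      exact nested_irrefl B hnest
    exact (isBlock_splitRel_iff hp hB hi1 hi2).2 (Or.inr (Or.inr ⟨hBl j (by omega) hm, hneq⟩))
  refine ⟨fun j => if j = 1 then lowerPart B i else c j, if_pos rfl, ?_, ?_⟩
  · intro j h1 hm
    dsimp only
    by_cases hj : j = 1
    · rw [if_pos hj]; exact (isBlock_splitRel_iff hp hB hi1 hi2).2 (Or.inl rfl)
    · rw [if_neg hj]; exact hblk j (by omega) hm
  · intro j h1 hm
    dsimp only
    by_cases hj : j = 1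
    · subst hj
      rw [if_pos rfl, if_neg (by omega : ¬ (1 + 1 = 1))]
      have hnest : Nested B (c 2) := by
        have := hN 1 le_rfl hm
        rwa [hc1] at this
      exact nested_imp_lower hp hB hi1 hi2 hnest
    · rw [if_neg hj, if_neg (by omega : ¬ (j + 1 = 1))]
      exact hN j h1 hm

lemma chainSet_upper_subset (hp : IsPartitionOn (Idx n) p) (hnc : NonCrossing p)
    (hB : IsBlock p B) (hi1 : 1 ≤ i) (hi2 : i < B.ncard) :
    chainSet (splitRel p B i) (upperPart B i) ⊆ chainSet p B := by
  rintro m ⟨c, hc1, hBl, hN⟩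
  have hblk : ∀ j, 2 ≤ j → j ≤ m → IsBlock p (c j) ∧ c j ≠ B := by
    intro j h2 hm
    have hnest : Nested (upperPart B i) (c j) := by
      have := chain_nested hN 1 j le_rfl (by omega) hm
      rwa [hc1] at this
    rcases (isBlock_splitRel_iff hp hB hi1 hi2).1 (hBl j (by omega) hm) with h | h | h
    · exact absurd hnest (by rw [h]; exact not_nested_lu hp hB hi1 hi2 (Or.inr rfl) (Or.inl rfl))
    · exact absurd hnest (by rw [h]; exact not_nested_lu hp hB hi1 hi2 (Or.inr rfl) (Or.inr rfl))
    · exact h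
  refine ⟨fun j => if j = 1 then B else c j, if_pos rfl, ?_, ?_⟩
  · intro j h1 hm
    dsimp only
    by_cases hj : j = 1
    · rw [if_pos hj]; exact hB
    · rw [if_neg hj]; exact (hblk j (by omega) hm).1
  · intro j h1 hm
    dsimp only
    by_cases hj : j = 1
    · subst hj
      rw [if_pos rfl, if_neg (by omega : ¬ (1 + 1 = 1))]
      have hnest : Nested (upperPart B i) (c 2) := by
        have := hN 1 le_rfl hm
        rwa [hc1] at this
      exact nested_upper_imp hp hnc hB hi1 hi2 (hblk 2 le_rfl (by omega)).1
        (hblk 2 le_rfl (by omega)).2 hnest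
    · rw [if_neg hj, if_neg (by omega : ¬ (j + 1 = 1))]
      exact hN j h1 hm

lemma chainSet_upper_supset (hp : IsPartitionOn (Idx n) p)
    (hB : IsBlock p B) (hi1 : 1 ≤ i) (hi2 : i < B.ncard) :
    chainSet p B ⊆ chainSet (splitRel p B i) (upperPart B i) := by
  rintro m ⟨c, hc1, hBl, hN⟩
  have hblk : ∀ j, 2 ≤ j → j ≤ m → IsBlock (splitRel p B i) (c j) := by
    intro j h2 hm
    have hnest : Nested B (c j) := by
      have := chain_nested hN 1 j le_rfl (by omega) hm
      rwa [hc1] at this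
    have hneq : c j ≠ B := by
      intro he
      rw [he] at hnest
      exact nested_irrefl B hnest
    exact (isBlock_splitRel_iff hp hB hi1 hi2).2 (Or.inr (Or.inr ⟨hBl j (by omega) hm, hneq⟩))
  refine ⟨fun j => if j = 1 then upperPart B i else c j, if_pos rfl, ?_, ?_⟩
  · intro j h1 hm
    dsimp only
    by_cases hj : j = 1
    · rw [if_pos hj]; exact (isBlock_splitRel_iff hp hB hi1 hi2).2 (Or.inr (Or.inl rfl))
    · rw [if_neg hj]; exact hblk j (by omega) hm
  · intro j h1 hm
    dsimp only
    by_cases hj : j = 1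
    · subst hj
      rw [if_pos rfl, if_neg (by omega : ¬ (1 + 1 = 1))]
      have hnest : Nested B (c 2) := by
        have := hN 1 le_rfl hm
        rwa [hc1] at this
      exact nested_imp_upper hp hB hi1 hi2 hnest
    · rw [if_neg hj, if_neg (by omega : ¬ (j + 1 = 1))]
      exact hN j h1 hm

lemma chainSet_other_subset (hp : IsPartitionOn (Idx n) p) (hnc : NonCrossing p)
    (hB : IsBlock p B) (hi1 : 1 ≤ i) (hi2 : i < B.ncard)
    {B' : Set ℕ} (hB' : IsBlock p B') (hne' : B' ≠ B) :
    chainSet (splitRel p B i) B' ⊆ chainSet p B' := by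
  classical
  rintro m ⟨c, hc1, hBl, hN⟩
  have hfin := block_finite hp hB
  have hne := block_nonempty hB
  have hB'l : B' ≠ lowerPart B i := by
    intro he
    obtain ⟨x, hx⟩ := lower_nonempty hne hi1
    exact hne' (block_eq_block hp hB' hB (he.symm ▸ hx) (lower_subset hx))
  have hB'u : B' ≠ upperPart B i := by
    intro he
    obtain ⟨x, hx⟩ := upper_nonempty hfin hne hi2
    exact hne' (block_eq_block hp hB' hB (he.symm ▸ hx) (upper_subset hx))
  refine ⟨fun j => if c j = lowerPart B i ∨ c j = upperPart B i then B else c j, ?_, ?_, ?_⟩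
  · dsimp only
    rw [hc1, if_neg (by push_neg; exact ⟨hB'l, hB'u⟩)]
  · intro j h1 hm
    dsimp only
    by_cases hj : c j = lowerPart B i ∨ c j = upperPart B i
    · rw [if_pos hj]; exact hB
    · rw [if_neg hj]
      push_neg at hj
      rcases (isBlock_splitRel_iff hp hB hi1 hi2).1 (hBl j h1 hm) with h | h | h
      · exact absurd h hj.1
      · exact absurd h hj.2
      · exact h.1
  · intro j h1 hm
    have hNj := hN j h1 hm
    have hbj1 := hBl (j + 1) (by omega) (by omega)
    dsimp only
    by_cases hj : c j = lowerPart B i ∨ c j = upperPart B i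
    · by_cases hj1 : c (j + 1) = lowerPart B i ∨ c (j + 1) = upperPart B i
      · exact absurd hNj (not_nested_lu hp hB hi1 hi2 hj hj1)
      · rw [if_pos hj, if_neg hj1]
        push_neg at hj1
        have hblk : IsBlock p (c (j + 1)) ∧ c (j + 1) ≠ B := by
          rcases (isBlock_splitRel_iff hp hB hi1 hi2).1 hbj1 with h | h | h
          · exact absurd h hj1.1
          · exact absurd h hj1.2
          · exact h
        rcases hj with h | h
        · rw [h] at hNj
          exact nested_lower_imp hp hnc hB hi1 hi2 hblk.1 hblk.2 hNj
        · rw [h] at hNj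
          exact nested_upper_imp hp hnc hB hi1 hi2 hblk.1 hblk.2 hNj
    · by_cases hj1 : c (j + 1) = lowerPart B i ∨ c (j + 1) = upperPart B i
      · rw [if_neg hj, if_pos hj1]
        rcases hj1 with h | h
        · rw [h] at hNj
          exact nested_of_lower hp hB hi1 hi2 hNj
        · rw [h] at hNj
          exact nested_of_upper hp hB hi1 hi2 hNj
      · rw [if_neg hj, if_neg hj1]
        exact hNj

end Chains

/-- splitting a block `B` of a non-crossing partition `p` of `[n]`
into its `i` smallest elements `B₁` and the rest `B₂` yields a non-crossing
partition `p_{B,i}` with `d(B₁) = d(B₂) = d_p(B)`, and no other block gains depth. -/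
theorem depth_splitRel
    (n : ℕ) (p : ℕ → ℕ → Prop)
    (hp : IsPartitionOn (Idx n) p) (hnc : NonCrossing p)
    (B : Set ℕ) (hB : IsBlock p B) (i : ℕ) (hi1 : 1 ≤ i) (hi2 : i < B.ncard) :
    IsPartitionOn (Idx n) (splitRel p B i) ∧
    NonCrossing (splitRel p B i) ∧
    depth (splitRel p B i) (lowerPart B i) = depth p B ∧
    depth (splitRel p B i) (upperPart B i) = depth p B ∧
    (∀ B' : Set ℕ, IsBlock p B' → B' ≠ B →
      depth (splitRel p B i) B' ≤ depth p B') := by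
  have hfin := block_finite hp hB
  refine ⟨⟨?_, ?_, ?_⟩, ?_, ?_, ?_, ?_⟩
  · -- symmetric
    rintro x y ⟨hpxy, h⟩
    exact ⟨hp.1 _ _ hpxy, by tauto⟩
  · -- transitive
    rintro x y z ⟨hpxy, h1⟩ ⟨hpyz, h2⟩
    refine ⟨hp.2.1 _ _ _ hpxy hpyz, ?_⟩
    rcases h1 with ⟨hx, hy⟩ | ⟨hx, hy⟩ | ⟨hx, hy⟩ <;>
      rcases h2 with ⟨hy', hz⟩ | ⟨hy', hz⟩ | ⟨hy', hz⟩
    · exact Or.inl ⟨hx, hz⟩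
    · exact absurd (lower_disj_upper hy hy') id
    · exact absurd hy.1 hy'
    · exact absurd (lower_disj_upper hy' hy) id
    · exact Or.inr (Or.inl ⟨hx, hz⟩)
    · exact absurd hy.1 hy'
    · exact absurd hy'.1 hy
    · exact absurd hy'.1 hy
    · exact Or.inr (Or.inr ⟨hx, hz⟩)
  · -- reflexivity domain
    intro x
    constructor
    · rintro ⟨hpxx, -⟩
      exact (hp.2.2 x).1 hpxx
    · intro hx
      have hpxx := (hp.2.2 x).2 hx
      refine ⟨hpxx, ?_⟩
      by_cases hxB : x ∈ B
      · have hxu : x ∈ lowerPart B i ∪ upperPart B i := by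
          rw [lower_union_upper]
          exact hxB
        rcases hxu with h | h
        · exact Or.inl ⟨h, h⟩
        · exact Or.inr (Or.inl ⟨h, h⟩)
      · exact Or.inr (Or.inr ⟨hxB, hxB⟩)
  · -- non-crossing
    intro x y z w hxy hyz hzw hxz hyw
    have pxz := hxz.1
    have pyw := hyw.1
    have pxy := hnc x y z w hxy hyz hzw pxz pyw
    refine ⟨pxy, ?_⟩
    by_cases hxB : x ∈ B
    · have hyB : y ∈ B := (mem_block_iff hp hB hxB y).1 pxy
      rcases hxz.2 with ⟨hxl, hzl⟩ | ⟨hxu, hzu⟩ | ⟨hxB', -⟩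
      · exact Or.inl ⟨hxl, hyB, le_trans (rank_mono hfin (le_of_lt hyz)) hzl.2⟩
      · exact Or.inr (Or.inl ⟨hxu, hyB, lt_of_lt_of_le hxu.2 (rank_mono hfin (le_of_lt hxy))⟩)
      · exact absurd hxB hxB'
    · have hyB : y ∉ B := fun hyB => hxB ((mem_block_iff hp hB hyB x).1 (hp.1 _ _ pxy))
      exact Or.inr (Or.inr ⟨hxB, hyB⟩)
  · -- depth lower
    rw [depth_eq, depth_eq]
    exact le_antisymm
      (csSup_le_csSup (chainSet_bddAbove p B) ⟨0, zero_mem_chainSet _ _⟩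
        (chainSet_lower_subset hp hnc hB hi1 hi2))
      (csSup_le_csSup (chainSet_bddAbove _ _) ⟨0, zero_mem_chainSet _ _⟩
        (chainSet_lower_supset hp hB hi1 hi2))
  · -- depth upper
    rw [depth_eq, depth_eq]
    exact le_antisymm
      (csSup_le_csSup (chainSet_bddAbove p B) ⟨0, zero_mem_chainSet _ _⟩
        (chainSet_upper_subset hp hnc hB hi1 hi2))
      (csSup_le_csSup (chainSet_bddAbove _ _) ⟨0, zero_mem_chainSet _ _⟩
        (chainSet_upper_supset hp hB hi1 hi2))
  · -- other blocks
    intro B' hB' hne'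
    rw [depth_eq, depth_eq]
    exact csSup_le_csSup (chainSet_bddAbove p B') ⟨0, zero_mem_chainSet _ _⟩
      (chainSet_other_subset hp hnc hB hi1 hi2 hB' hne')

end NCPaper
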